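/- Let X be a measurable space, ν = (ν_N) a sequence of probability measures on X, and f : X → [0, ∞) a bounded measurable function. Let F_ν be the filter on X generated by the measurable sets J with lim_{N→∞} ν_N(J) = 1. Then lim_{N→∞} ∫_X f dν_N = 0 if and only if f converges to 0 along the filter F_ν. -/

import Mathlib

open MeasureTheory Filter Topology
open scoped ENNReal

/-- The filter on `X` generated by the measurable sets of `ν`-density one. -/
def densityFilter {X : Type*} [MeasurableSpace X] (ν : ℕ → Measure X) : Filter X :=
  Filter.generate {J | MeasurableSet J ∧ Tendsto (fun N => ν N J) atTop (𝓝 1)}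

lemma compl_tendsto_iff {X : Type*} [MeasurableSpace X] (ν : ℕ → Measure X)
    (hν : ∀ N, IsProbabilityMeasure (ν N)) {J : Set X} (hJ : MeasurableSet J) :
    Tendsto (fun N => ν N Jᶜ) atTop (𝓝 0) ↔ Tendsto (fun N => ν N J) atTop (𝓝 1) := by
  have hcompl : ∀ N, ν N Jᶜ = 1 - ν N J := by
    intro N
    have := hν N
    rw [measure_compl hJ (measure_ne_top _ _), measure_univ]
  constructor
  · intro h
    have h1 : Tendsto (fun N => (1 : ℝ≥0∞) - ν N Jᶜ) atTop (𝓝 (1 - 0)) :=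
      ((ENNReal.continuous_sub_left (by norm_num)).tendsto _).comp h
    simp only [tsub_zero] at h1
    convert h1 using 2 with N
    have := hν N
    rw [hcompl N, ENNReal.sub_sub_cancel (by norm_num) (prob_le_one)]
  · intro h
    have h1 : Tendsto (fun N => (1 : ℝ≥0∞) - ν N J) atTop (𝓝 (1 - 1)) :=
      ((ENNReal.continuous_sub_left (by norm_num)).tendsto _).comp h
    simp only [tsub_self] at h1
    simpa only [hcompl] using h1

lemma sInter_tendsto {X : Type*} [MeasurableSpace X] (ν : ℕ → Measure X)
    {t : Set (Set X)} (ht : t.Finite)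
    (h : ∀ J ∈ t, Tendsto (fun N => ν N Jᶜ) atTop (𝓝 0)) :
    Tendsto (fun N => ν N (⋂₀ t)ᶜ) atTop (𝓝 0) := by
  revert h
  refine Set.Finite.induction_on
    (motive := fun u _ => (∀ J ∈ u, Tendsto (fun N => ν N Jᶜ) atTop (𝓝 0)) →
      Tendsto (fun N => ν N (⋂₀ u)ᶜ) atTop (𝓝 0)) t ht ?_ ?_
  · intro _; simp
  · intro A s hA hs ih h
    have hA' := h A (Set.mem_insert _ _)
    have ih' := ih fun J hJ => h J (Set.mem_insert_of_mem _ hJ)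
    have hle : ∀ N, ν N (⋂₀ insert A s)ᶜ ≤ ν N Aᶜ + ν N (⋂₀ s)ᶜ := by
      intro N
      rw [Set.sInter_insert, Set.compl_inter]
      exact measure_union_le _ _
    have hsum : Tendsto (fun N => ν N Aᶜ + ν N (⋂₀ s)ᶜ) atTop (𝓝 (0 + 0)) :=
      hA'.add ih'
    rw [add_zero] at hsum
    exact tendsto_of_tendsto_of_tendsto_of_le_of_le tendsto_const_nhds hsum
      (fun N => zero_le) hle

/-- Koopman–von Neumann lemma for measure sequences: for a bounded measurable
nonnegative function `f`, the integrals `∫ f dν_N` tend to `0` iff `f` tends to `0`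
along the filter generated by the sets of `ν`-density one. -/
theorem koopman_von_neumann_measure_sequences
    {X : Type*} [MeasurableSpace X] (ν : ℕ → Measure X)
    (hν : ∀ N, IsProbabilityMeasure (ν N)) (f : X → ℝ)
    (hmeas : Measurable f) (hpos : ∀ x, 0 ≤ f x) (M : ℝ) (hbdd : ∀ x, f x ≤ M) :
    Tendsto (fun N => ∫ x, f x ∂ν N) atTop (𝓝 0) ↔
      Tendsto f (densityFilter ν) (𝓝 0) := by
  have hint : ∀ N, Integrable f (ν N) := by
    intro N
    have := hν N
    refine (integrable_const M).mono' hmeas.aestronglyMeasurable ?_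
    filter_upwards with x
    rw [Real.norm_eq_abs, abs_of_nonneg (hpos x)]
    exact hbdd x
  constructor
  · intro h
    rw [NormedAddCommGroup.tendsto_nhds_zero]
    intro ε hε
    set J : Set X := {x | f x < ε} with hJdef
    have hJmeas : MeasurableSet J := measurableSet_lt hmeas measurable_const
    have hJc : ∀ N, ν N Jᶜ ≤ ENNReal.ofReal (∫ x, f x ∂ν N) / ENNReal.ofReal ε := by
      intro N
      have markov := meas_ge_le_lintegral_div
        (μ := ν N) (f := fun x => ENNReal.ofReal (f x))
        (hmeas.ennreal_ofReal).aemeasurable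
        (ε := ENNReal.ofReal ε) (ENNReal.ofReal_pos.mpr hε).ne' ENNReal.ofReal_ne_top
      have hset : {x | ENNReal.ofReal ε ≤ ENNReal.ofReal (f x)} = Jᶜ := by
        ext x
        simp [hJdef, ENNReal.ofReal_le_ofReal_iff (hpos x), not_lt]
      have hlint : ∫⁻ x, ENNReal.ofReal (f x) ∂ν N = ENNReal.ofReal (∫ x, f x ∂ν N) := by
        rw [ofReal_integral_eq_lintegral_ofReal (hint N) (Filter.Eventually.of_forall hpos)]
      rw [hset, hlint] at markov
      exact markov
    have htend : Tendsto (fun N => ν N Jᶜ) atTop (𝓝 0) := by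
      have h0 : Tendsto (fun N => ENNReal.ofReal (∫ x, f x ∂ν N) / ENNReal.ofReal ε)
          atTop (𝓝 0) := by
        have : Tendsto (fun N => ENNReal.ofReal (∫ x, f x ∂ν N)) atTop (𝓝 0) := by
          have := (ENNReal.continuous_ofReal.tendsto 0).comp h
          simpa [Function.comp_def] using this
        have := ENNReal.Tendsto.mul_const (b := (ENNReal.ofReal ε)⁻¹) this
          (Or.inr (by simp [hε]))
        simpa [div_eq_mul_inv] using this
      exact tendsto_of_tendsto_of_tendsto_of_le_of_le tendsto_const_nhds h0
        (fun N => zero_le) hJc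
    have hJmem : J ∈ densityFilter ν :=
      Filter.mem_generate_of_mem ⟨hJmeas, (compl_tendsto_iff ν hν hJmeas).mp htend⟩
    filter_upwards [hJmem] with x hx
    rw [Real.norm_eq_abs, abs_of_nonneg (hpos x)]
    exact hx
  · intro h
    have hXne : Nonempty X := by
      by_contra hempty
      have := (hν 0).measure_univ
      rw [Set.univ_eq_empty_iff.mpr (not_nonempty_iff.mp hempty), measure_empty] at this
      exact zero_ne_one this
    have hM : 0 ≤ M := le_trans (hpos hXne.some) (hbdd hXne.some)
    rw [NormedAddCommGroup.tendsto_nhds_zero]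
    intro ε hε
    have hS : f ⁻¹' (Set.Iio (ε / 2)) ∈ densityFilter ν :=
      h (Iio_mem_nhds (by linarith))
    rw [densityFilter, Filter.mem_generate_iff] at hS
    obtain ⟨t, hts, htfin, htsub⟩ := hS
    set J : Set X := ⋂₀ t with hJdef
    have hJmeas : MeasurableSet J :=
      MeasurableSet.sInter htfin.countable (fun s hs => (hts hs).1)
    have hJc : Tendsto (fun N => ν N Jᶜ) atTop (𝓝 0) :=
      sInter_tendsto ν htfin (fun s hs =>
        (compl_tendsto_iff ν hν (hts hs).1).mpr (hts hs).2)
    have hJlt : ∀ x ∈ J, f x < ε / 2 := fun x hx => htsub hx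
    -- bound the integral
    have hbound : ∀ N, ∫ x, f x ∂ν N ≤ ε / 2 + M * (ν N Jᶜ).toReal := by
      intro N
      have := hν N
      have hsplit : ∫ x in J, f x ∂ν N + ∫ x in Jᶜ, f x ∂ν N = ∫ x, f x ∂ν N :=
        integral_add_compl hJmeas (hint N)
      have h1 : ∫ x in J, f x ∂ν N ≤ ε / 2 := by
        calc ∫ x in J, f x ∂ν N ≤ ∫ _ in J, (ε / 2) ∂ν N := by
              refine setIntegral_mono_on ((hint N).integrableOn) (integrableOn_const)
                hJmeas (fun x hx => (hJlt x hx).le)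
            _ = (ν N J).toReal * (ε / 2) := by rw [setIntegral_const, smul_eq_mul, measureReal_def]
            _ ≤ 1 * (ε / 2) := by
              refine mul_le_mul_of_nonneg_right ?_ (by linarith)
              simpa using ENNReal.toReal_mono (by norm_num) prob_le_one
            _ = ε / 2 := one_mul _
      have h2 : ∫ x in Jᶜ, f x ∂ν N ≤ M * (ν N Jᶜ).toReal := by
        calc ∫ x in Jᶜ, f x ∂ν N ≤ ∫ _ in Jᶜ, M ∂ν N := by
              refine setIntegral_mono_on ((hint N).integrableOn) (integrableOn_const)
                hJmeas.compl (fun x _ => hbdd x)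
            _ = (ν N Jᶜ).toReal * M := by rw [setIntegral_const, smul_eq_mul, measureReal_def]
            _ = M * (ν N Jᶜ).toReal := mul_comm _ _
      linarith [hsplit, h1, h2]
    have htoReal : Tendsto (fun N => (ν N Jᶜ).toReal) atTop (𝓝 0) := by
      have := (ENNReal.tendsto_toReal (by norm_num : (0:ℝ≥0∞) ≠ ∞)).comp hJc
      simpa [Function.comp_def] using this
    have hMt : Tendsto (fun N => M * (ν N Jᶜ).toReal) atTop (𝓝 0) := by
      simpa using htoReal.const_mul M
    have hev : ∀ᶠ N in atTop, M * (ν N Jᶜ).toReal < ε / 2 :=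
      hMt (Iio_mem_nhds (by linarith : (0:ℝ) < ε / 2))
    filter_upwards [hev] with N hN
    rw [Real.norm_eq_abs, abs_of_nonneg (integral_nonneg hpos)]
    calc ∫ x, f x ∂ν N ≤ ε / 2 + M * (ν N Jᶜ).toReal := hbound N
      _ < ε / 2 + ε / 2 := by linarith
      _ = ε := by ring
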